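/- Let ℱ be a finite collection of finite connected graphs and let 𝒢 be a minor-closed graph family that contains ℱ-necklaces of arbitrarily large length. Then 𝒢 contains uniform ℱ-necklaces of arbitrarily large length; moreover, there exist a graph H ∈ ℱ and vertices x, y ∈ V(H) such that every uniform necklace with structure (H, x, y), of every length, belongs to 𝒢. -/

import Mathlib

/-- `φ` is a minor model of `H` in `G`: branch sets are connected (hence nonempty) and
pairwise disjoint, and every edge of `H` is realized by an edge of `G` between the
corresponding branch sets. -/
def IsMinorModel {V W : Type} (G : SimpleGraph V) (H : SimpleGraph W) (φ : W → Set V) :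
    Prop :=
  (∀ w : W, (G.induce (φ w)).Connected) ∧
  (∀ w₁ w₂ : W, w₁ ≠ w₂ → Disjoint (φ w₁) (φ w₂)) ∧
  (∀ w₁ w₂ : W, H.Adj w₁ w₂ → ∃ x ∈ φ w₁, ∃ y ∈ φ w₂, G.Adj x y)

/-- `H` is a minor of `G`. -/
def IsMinorOf {W V : Type} (H : SimpleGraph W) (G : SimpleGraph V) : Prop :=
  ∃ φ : W → Set V, IsMinorModel G H φ
/-- `G` is an `F`-necklace of length `t` with beads `S 0, …, S (t-1)`: the beads
partition `V(G)`, each bead induces a graph isomorphic to a member of the family `F`,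
there is exactly one edge between consecutive beads, and there are no edges between any
other pair of beads. -/
def IsNecklaceWith {V κ : Type} {β : κ → Type} (F : ∀ i : κ, SimpleGraph (β i))
    (G : SimpleGraph V) (t : ℕ) (S : Fin t → Set V) : Prop :=
  (∀ v : V, ∃ i : Fin t, v ∈ S i) ∧
  (∀ i j : Fin t, i ≠ j → Disjoint (S i) (S j)) ∧
  (∀ i : Fin t, ∃ b : κ, Nonempty ((G.induce (S i)) ≃g F b)) ∧
  (∀ i j : Fin t, (j : ℕ) = (i : ℕ) + 1 →
    ∃! p : V × V, p.1 ∈ S i ∧ p.2 ∈ S j ∧ G.Adj p.1 p.2) ∧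
  (∀ i j : Fin t, (i : ℕ) + 1 < (j : ℕ) →
    ∀ x ∈ S i, ∀ y ∈ S j, ¬ G.Adj x y)

/-- `G` is an `F`-necklace of length `t`. -/
def IsNecklace {V κ : Type} {β : κ → Type} (F : ∀ i : κ, SimpleGraph (β i))
    (G : SimpleGraph V) (t : ℕ) : Prop :=
  ∃ S : Fin t → Set V, IsNecklaceWith F G t S

/-- `G` is a uniform necklace with structure `(H, x, y)` of length `t`, with beads
`S 0, …, S (t-1)`: the beads partition `V(G)`, each bead induces a copy of `H`,
there is exactly one edge between consecutive beads and no edge between non-consecutive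
beads, and the isomorphisms can be chosen so that the unique edge between the `i`-th and
`(i+1)`-st beads joins the image of `x` in bead `i` to the image of `y` in bead `i+1`. -/
def IsUniformNecklaceWith {V W : Type} (H : SimpleGraph W) (x y : W)
    (G : SimpleGraph V) (t : ℕ) (S : Fin t → Set V) : Prop :=
  (∀ v : V, ∃ i : Fin t, v ∈ S i) ∧
  (∀ i j : Fin t, i ≠ j → Disjoint (S i) (S j)) ∧
  (∀ i j : Fin t, (j : ℕ) = (i : ℕ) + 1 →
    ∃! p : V × V, p.1 ∈ S i ∧ p.2 ∈ S j ∧ G.Adj p.1 p.2) ∧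
  (∀ i j : Fin t, (i : ℕ) + 1 < (j : ℕ) →
    ∀ a ∈ S i, ∀ b ∈ S j, ¬ G.Adj a b) ∧
  ∃ f : ∀ i : Fin t, H ≃g (G.induce (S i)),
    ∀ i j : Fin t, (j : ℕ) = (i : ℕ) + 1 →
      G.Adj ((f i) x).val ((f j) y).val

open SimpleGraph

/-- canonical uniform necklace -/
def Nk {W : Type} (H : SimpleGraph W) (x y : W) (t : ℕ) : SimpleGraph (Fin t × W) where
  Adj p q := (p.1 = q.1 ∧ H.Adj p.2 q.2) ∨
    ((q.1 : ℕ) = (p.1 : ℕ) + 1 ∧ p.2 = x ∧ q.2 = y) ∨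
    ((p.1 : ℕ) = (q.1 : ℕ) + 1 ∧ p.2 = y ∧ q.2 = x)
  symm := by
    constructor
    rintro p q (⟨h1, h2⟩ | ⟨h1, h2, h3⟩ | ⟨h1, h2, h3⟩)
    · exact Or.inl ⟨h1.symm, h2.symm⟩
    · exact Or.inr (Or.inr ⟨h1, h3, h2⟩)
    · exact Or.inr (Or.inl ⟨h1, h3, h2⟩)
  loopless := by
    constructor
    rintro p (⟨h1, h2⟩ | ⟨h1, h2, h3⟩ | ⟨h1, h2, h3⟩)
    · exact H.loopless.irrefl _ h2
    · omega
    · omega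

lemma nk_adj {W : Type} {H : SimpleGraph W} {x y : W} {t : ℕ} {p q : Fin t × W} :
    (Nk H x y t).Adj p q ↔ (p.1 = q.1 ∧ H.Adj p.2 q.2) ∨
    ((q.1 : ℕ) = (p.1 : ℕ) + 1 ∧ p.2 = x ∧ q.2 = y) ∨
    ((p.1 : ℕ) = (q.1 : ℕ) + 1 ∧ p.2 = y ∧ q.2 = x) := Iff.rfl

def nkBeadEquiv {W : Type} (t : ℕ) (i : Fin t) :
    W ≃ {p : Fin t × W // p ∈ {p : Fin t × W | p.1 = i}} where
  toFun w := ⟨(i, w), rfl⟩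
  invFun p := p.1.2
  left_inv w := rfl
  right_inv p := by
    apply Subtype.ext
    have h : p.1.1 = i := p.2
    exact Prod.ext h.symm rfl

lemma nk_isUniform {W : Type} (H : SimpleGraph W) (x y : W) (t : ℕ) :
    IsUniformNecklaceWith H x y (Nk H x y t) t (fun i => {p | p.1 = i}) := by
  refine ⟨fun v => ⟨v.1, rfl⟩, ?_, ?_, ?_, ?_⟩
  · intro i j hij
    rw [Set.disjoint_left]
    rintro p (hp : p.1 = i) (hq : p.1 = j)
    exact hij (hp ▸ hq)
  · intro i j hj
    refine ⟨((i, x), (j, y)), ⟨rfl, rfl, Or.inr (Or.inl ⟨hj, rfl, rfl⟩)⟩, ?_⟩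
    rintro ⟨p, q⟩ ⟨(hp : p.1 = i), (hq : q.1 = j), hadj⟩
    rcases hadj with ⟨h1, _⟩ | ⟨_, h2, h3⟩ | ⟨h1, _, _⟩
    · exfalso; rw [hp, hq] at h1; omega
    · exact Prod.ext (Prod.ext hp h2) (Prod.ext hq h3)
    · exfalso; rw [hp, hq] at h1; omega
  · rintro i j hij a (ha : a.1 = i) c (hc : c.1 = j) hadj
    rcases hadj with ⟨h1, _⟩ | ⟨h1, _, _⟩ | ⟨h1, _, _⟩ <;>
      (exfalso; rw [ha, hc] at * ; first
        | (apply_fun (Fin.val) at h1; omega)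
        | omega)
  · refine ⟨fun i => ⟨nkBeadEquiv t i, ?_⟩, ?_⟩
    · intro a c
      show (Nk H x y t).Adj (i, a) (i, c) ↔ H.Adj a c
      constructor
      · rintro (⟨_, h2⟩ | ⟨h1, _, _⟩ | ⟨h1, _, _⟩)
        · exact h2
        · exact absurd h1 (by simp)
        · exact absurd h1 (by simp)
      · intro h; exact Or.inl ⟨rfl, h⟩
    · intro i j hj
      exact Or.inr (Or.inl ⟨hj, rfl, rfl⟩)



lemma conn_induce_subsingleton {α : Type} (A : SimpleGraph α) (s : Set α)
    (hne : s.Nonempty) (hss : s.Subsingleton) : (A.induce s).Connected := by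
  rw [SimpleGraph.connected_iff]
  constructor
  · intro a b
    have : a = b := Subtype.ext (hss a.2 b.2)
    exact this ▸ SimpleGraph.Reachable.refl a
  · exact ⟨⟨hne.choose, hne.choose_spec⟩⟩

lemma bead_unique {V : Type} {n : ℕ} {S : Fin n → Set V}
    (hdisj : ∀ i j : Fin n, i ≠ j → Disjoint (S i) (S j)) {v : V} {i j : Fin n}
    (hi : v ∈ S i) (hj : v ∈ S j) : i = j := by
  by_contra h
  exact Set.disjoint_left.mp (hdisj i j h) hi hj

lemma uniform_minor {V W : Type} {H : SimpleGraph W} {x y : W} {G : SimpleGraph V} {t : ℕ}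
    {S : Fin t → Set V} (h : IsUniformNecklaceWith H x y G t S) :
    IsMinorOf G (Nk H x y t) := by
  obtain ⟨hcov, hdisj, huniq, hfar, f, hf⟩ := h
  refine ⟨fun v => {p : Fin t × W | v ∈ S p.1 ∧ (f p.1 p.2 : V) = v}, ?_, ?_, ?_⟩
  · intro v
    apply conn_induce_subsingleton
    · obtain ⟨i, hi⟩ := hcov v
      exact ⟨(i, (f i).symm ⟨v, hi⟩), hi, by simp⟩
    · rintro ⟨i₁, w₁⟩ ⟨h1, h1'⟩ ⟨i₂, w₂⟩ ⟨h2, h2'⟩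
      obtain rfl : i₁ = i₂ := bead_unique hdisj h1 h2
      have : f i₁ w₁ = f i₁ w₂ := Subtype.ext (h1'.trans h2'.symm)
      have : w₁ = w₂ := (f i₁).toEquiv.injective this
      rw [this]
  · intro v₁ v₂ hne
    rw [Set.disjoint_left]
    rintro p ⟨_, hp1⟩ ⟨_, hp2⟩
    exact hne (hp1.symm.trans hp2)
  · intro v₁ v₂ hadj
    obtain ⟨i₁, hi₁⟩ := hcov v₁
    obtain ⟨i₂, hi₂⟩ := hcov v₂
    by_cases he : i₁ = i₂
    · subst he
      refine ⟨(i₁, (f i₁).symm ⟨v₁, hi₁⟩), ⟨hi₁, by simp⟩,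
        (i₁, (f i₁).symm ⟨v₂, hi₂⟩), ⟨hi₂, by simp⟩, Or.inl ⟨rfl, ?_⟩⟩
      have hA : (G.induce (S i₁)).Adj ⟨v₁, hi₁⟩ ⟨v₂, hi₂⟩ := hadj
      exact ((f i₁).symm.map_adj_iff).mpr hA
    · have hne' : (i₁ : ℕ) ≠ (i₂ : ℕ) := fun hh => he (Fin.ext hh)
      rcases lt_or_gt_of_ne hne' with hlt | hgt
      · rcases eq_or_lt_of_le (Nat.succ_le_of_lt hlt) with hsucc | hfar'
        · obtain ⟨p₀, _, hup⟩ := huniq i₁ i₂ hsucc.symm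
          have h1 := hup (v₁, v₂) ⟨hi₁, hi₂, hadj⟩
          have h2 := hup ((f i₁ x).val, (f i₂ y).val)
            ⟨(f i₁ x).2, (f i₂ y).2, hf i₁ i₂ hsucc.symm⟩
          have hv₁ : (f i₁ x : V) = v₁ := congrArg Prod.fst (h2.trans h1.symm)
          have hv₂ : (f i₂ y : V) = v₂ := congrArg Prod.snd (h2.trans h1.symm)
          exact ⟨(i₁, x), ⟨hi₁, hv₁⟩, (i₂, y), ⟨hi₂, hv₂⟩,
            Or.inr (Or.inl ⟨hsucc.symm, rfl, rfl⟩)⟩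
        · exact absurd hadj (hfar i₁ i₂ hfar' v₁ hi₁ v₂ hi₂)
      · rcases eq_or_lt_of_le (Nat.succ_le_of_lt hgt) with hsucc | hfar'
        · obtain ⟨p₀, _, hup⟩ := huniq i₂ i₁ hsucc.symm
          have h1 := hup (v₂, v₁) ⟨hi₂, hi₁, hadj.symm⟩
          have h2 := hup ((f i₂ x).val, (f i₁ y).val)
            ⟨(f i₂ x).2, (f i₁ y).2, hf i₂ i₁ hsucc.symm⟩
          have hv₂ : (f i₂ x : V) = v₂ := congrArg Prod.fst (h2.trans h1.symm)
          have hv₁ : (f i₁ y : V) = v₁ := congrArg Prod.snd (h2.trans h1.symm)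
          exact ⟨(i₁, y), ⟨hi₁, hv₁⟩, (i₂, x), ⟨hi₂, hv₂⟩,
            Or.inr (Or.inr ⟨hsucc.symm, rfl, rfl⟩)⟩
        · exact absurd hadj.symm (hfar i₂ i₁ hfar' v₂ hi₂ v₁ hi₁)


def OccursAt {κ : Type} {β : κ → Type} (F : ∀ i : κ, SimpleGraph (β i)) {V : Type}
    (G : SimpleGraph V) {n : ℕ} (S : Fin n → Set V) (b : κ) (x y : β b) (i : Fin n) :
    Prop :=
  ∃ g : (G.induce (S i)) ≃g F b,
    (∃ j : Fin n, (j : ℕ) = (i : ℕ) + 1 ∧ ∃ q ∈ S j, G.Adj (g.symm x).val q) ∧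
    (∃ j : Fin n, (i : ℕ) = (j : ℕ) + 1 ∧ ∃ p ∈ S j, G.Adj p (g.symm y).val)

lemma occurs_exists {κ : Type} {β : κ → Type} {F : ∀ i : κ, SimpleGraph (β i)} {V : Type}
    {G : SimpleGraph V} {n : ℕ} {S : Fin n → Set V} (hN : IsNecklaceWith F G n S)
    (i : Fin n) (h0 : 0 < (i : ℕ)) (h1 : (i : ℕ) + 1 < n) :
    ∃ (b : κ) (x y : β b), OccursAt F G S b x y i := by
  obtain ⟨b, ⟨g⟩⟩ := hN.2.2.1 i
  obtain ⟨p, ⟨hp1, hp2, hp3⟩, -⟩ := hN.2.2.2.1 i ⟨(i : ℕ) + 1, h1⟩ rfl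
  obtain ⟨q, ⟨hq1, hq2, hq3⟩, -⟩ := hN.2.2.2.1 ⟨(i : ℕ) - 1, by omega⟩ i
    (show (i : ℕ) = (i : ℕ) - 1 + 1 by omega)
  refine ⟨b, g ⟨p.1, hp1⟩, g ⟨q.2, hq2⟩, g,
    ⟨⟨(i : ℕ) + 1, h1⟩, rfl, p.2, hp2, ?_⟩,
    ⟨⟨(i : ℕ) - 1, by omega⟩, show (i : ℕ) = (i : ℕ) - 1 + 1 by omega, q.1, hq1, ?_⟩⟩
  · rw [g.symm_apply_apply]; exact hp3
  · rw [g.symm_apply_apply]; exact hq3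



lemma lemD {κ : Type} {β : κ → Type} {F : ∀ i : κ, SimpleGraph (β i)}
    (hFconn : ∀ i, (F i).Connected) {V : Type} {G : SimpleGraph V} {n : ℕ}
    {S : Fin n → Set V} (hN : IsNecklaceWith F G n S) (b : κ) (x y : β b) (k : ℕ)
    (c : Fin (k + 1) → Fin n)
    (hmono : ∀ m₁ m₂ : Fin (k + 1), m₁ < m₂ → (c m₁ : ℕ) < (c m₂ : ℕ))
    (hocc : ∀ m, OccursAt F G S b x y (c m)) :
    IsMinorOf (Nk (F b) x y k) G := by
  classical
  obtain ⟨hcov, hdisj, hiso, huniq, hfar⟩ := hN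
  unfold OccursAt at hocc
  choose g hocc using hocc
  choose jR hjR qv hqv hadjR using fun m => (hocc m).1
  choose jL hjL pv hpv hadjL using fun m => (hocc m).2
  have hAD : ∀ j : Fin k, (c j.castSucc : ℕ) < (c j.succ : ℕ) :=
    fun j => hmono _ _ Fin.castSucc_lt_succ
  have hbead_conn : ∀ i : Fin n, (G.induce (S i)).Connected := by
    intro i
    obtain ⟨b', ⟨e⟩⟩ := hiso i
    exact e.connected_iff.mpr (hFconn b')
  have hseg_reach : ∀ (T : Set V) (i : Fin n) (hsub : S i ⊆ T) (u v : V)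
      (hu : u ∈ S i) (hv : v ∈ S i),
      (G.induce T).Reachable ⟨u, hsub hu⟩ ⟨v, hsub hv⟩ := by
    intro T i hsub u v hu hv
    have h := (hbead_conn i).preconnected ⟨u, hu⟩ ⟨v, hv⟩
    exact h.map (G.induceHomOfLE hsub).toHom
  set φ : Fin k × β b → Set V := fun jw =>
    {v | jw.2 = y ∧ ∃ i : Fin n, (c jw.1.castSucc : ℕ) < (i : ℕ) ∧
        (i : ℕ) < (c jw.1.succ : ℕ) ∧ v ∈ S i} ∪ {((g jw.1.succ).symm jw.2).val}
    with hφ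
  have hsegmem : ∀ (j : Fin k) (w : β b) (hw : w = y) (i : Fin n)
      (h1 : (c j.castSucc : ℕ) < (i : ℕ)) (h2 : (i : ℕ) < (c j.succ : ℕ))
      (v : V) (hv : v ∈ S i), v ∈ φ (j, w) :=
    fun j w hw i h1 h2 v hv => Or.inl ⟨hw, i, h1, h2, hv⟩
  have hselfmem : ∀ (j : Fin k) (w : β b), ((g j.succ).symm w).val ∈ φ (j, w) :=
    fun j w => Or.inr rfl
  have hchar : ∀ (j : Fin k) (w : β b) (v : V), v ∈ φ (j, w) →
      ∃ i : Fin n, v ∈ S i ∧ (c j.castSucc : ℕ) < (i : ℕ) ∧ (i : ℕ) ≤ (c j.succ : ℕ) ∧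
        ((i : ℕ) = (c j.succ : ℕ) → v = ((g j.succ).symm w).val) ∧
        ((i : ℕ) < (c j.succ : ℕ) → w = y) := by
    rintro j w v (⟨hwy, i, h1, h2, hv⟩ | hv)
    · have h1' : (c j.castSucc : ℕ) < (i : ℕ) := h1
      have h2' : (i : ℕ) < (c j.succ : ℕ) := h2
      have hwy' : w = y := hwy
      exact ⟨i, hv, h1', le_of_lt h2', fun h => absurd h (by omega), fun _ => hwy'⟩
    · have hv' : v = ((g j.succ).symm w).val := hv
      exact ⟨c j.succ, hv' ▸ ((g j.succ).symm w).2, hAD j, le_refl _,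
        fun _ => hv', fun h => absurd h (by omega)⟩
  refine ⟨φ, ?_, ?_, ?_⟩
  · -- connectivity
    rintro ⟨j, w⟩
    by_cases hw : w = y
    · rw [SimpleGraph.connected_iff]
      have hyvT : ((g j.succ).symm w).val ∈ φ (j, w) := hselfmem j w
      constructor
      · have key : ∀ m : ℕ, ∀ (i : Fin n) (hgt : (c j.castSucc : ℕ) < (i : ℕ))
            (heq : (i : ℕ) + (m + 1) = (c j.succ : ℕ)) (v : V) (hv : v ∈ S i),
            (G.induce (φ (j, w))).Reachable
              ⟨v, hsegmem j w hw i hgt (by omega) v hv⟩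
              ⟨((g j.succ).symm w).val, hyvT⟩ := by
          intro m
          induction m with
          | zero =>
            intro i hgt heq v hv
            have hiL : jL j.succ = i := by
              have := hjL j.succ
              exact Fin.ext (by omega)
            have hsub : S i ⊆ φ (j, w) :=
              fun u hu => hsegmem j w hw i hgt (by omega) u hu
            refine (hseg_reach (φ (j, w)) i hsub v (pv j.succ) hv (hiL ▸ hpv j.succ)).trans ?_
            have hadj : G.Adj (pv j.succ) (((g j.succ).symm w).val) := by
              rw [hw]; exact hadjL j.succ
            exact SimpleGraph.Adj.reachable
              (show (G.induce (φ (j, w))).Adj ⟨pv j.succ, _⟩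
                ⟨((g j.succ).symm w).val, hyvT⟩ from hadj)
          | succ m ih =>
            intro i hgt heq v hv
            have h1 : (i : ℕ) + 1 < n := by have := (c j.succ).isLt; omega
            obtain ⟨pr, ⟨hpr1, hpr2, hpr3⟩, -⟩ := huniq i ⟨(i : ℕ) + 1, h1⟩ rfl
            have hsub : S i ⊆ φ (j, w) :=
              fun u hu => hsegmem j w hw i hgt (by omega) u hu
            have hgt' : (c j.castSucc : ℕ) < ((⟨(i : ℕ) + 1, h1⟩ : Fin n) : ℕ) := by
              simp only [Fin.val_mk]; omega
            have heq' : ((⟨(i : ℕ) + 1, h1⟩ : Fin n) : ℕ) + (m + 1) = (c j.succ : ℕ) := by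
              simp only [Fin.val_mk]; omega
            refine (hseg_reach (φ (j, w)) i hsub v pr.1 hv hpr1).trans ?_
            refine (SimpleGraph.Adj.reachable
              (show (G.induce (φ (j, w))).Adj ⟨pr.1, hsub hpr1⟩
                ⟨pr.2, hsegmem j w hw ⟨(i : ℕ) + 1, h1⟩ hgt' (by omega) pr.2 hpr2⟩
                from hpr3)).trans ?_
            exact ih ⟨(i : ℕ) + 1, h1⟩ hgt' heq' pr.2 hpr2
        have reach : ∀ a : {v // v ∈ φ (j, w)},
            (G.induce (φ (j, w))).Reachable a ⟨((g j.succ).symm w).val, hyvT⟩ := by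
          rintro ⟨a, ha⟩
          rcases ha with ⟨-, i, hgt, hlt, hv⟩ | ha
          · have hgt' : (c j.castSucc : ℕ) < (i : ℕ) := hgt
            have hlt' : (i : ℕ) < (c j.succ : ℕ) := hlt
            exact key ((c j.succ : ℕ) - ((i : ℕ) + 1)) i hgt' (by omega) a hv
          · have ha' : a = ((g j.succ).symm w).val := ha
            have : (⟨a, Or.inr ha⟩ : {v // v ∈ φ (j, w)}) =
                ⟨((g j.succ).symm w).val, hyvT⟩ := Subtype.ext ha'
            rw [this]
        intro a bb
        exact (reach a).trans (reach bb).symm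
      · exact ⟨⟨((g j.succ).symm w).val, hyvT⟩⟩
    · apply conn_induce_subsingleton
      · exact ⟨((g j.succ).symm w).val, hselfmem j w⟩
      · rintro a (⟨hwy, -⟩ | ha) a' (⟨hwy', -⟩ | ha')
        · exact absurd hwy hw
        · exact absurd hwy hw
        · exact absurd hwy' hw
        · have ha2 : a = ((g j.succ).symm w).val := ha
          have ha2' : a' = ((g j.succ).symm w).val := ha'
          exact ha2.trans ha2'.symm
  · -- disjointness
    rintro ⟨j₁, w₁⟩ ⟨j₂, w₂⟩ hne12
    rw [Set.disjoint_left]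
    intro v hv₁ hv₂
    obtain ⟨i₁, hvi₁, hA₁, hD₁, hE₁, hY₁⟩ := hchar j₁ w₁ v hv₁
    obtain ⟨i₂, hvi₂, hA₂, hD₂, hE₂, hY₂⟩ := hchar j₂ w₂ v hv₂
    have hii : i₁ = i₂ := bead_unique hdisj hvi₁ hvi₂
    have hii' : (i₁ : ℕ) = (i₂ : ℕ) := by rw [hii]
    by_cases hjj : j₁ = j₂
    · subst hjj
      have hww : w₁ ≠ w₂ := fun h => hne12 (by rw [h])
      rcases eq_or_lt_of_le hD₁ with hEq | hLt
      · have hv1 := hE₁ hEq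
        have hv2 := hE₂ (by omega)
        exact hww ((g j₁.succ).symm.toEquiv.injective (Subtype.ext (hv1 ▸ hv2)))
      · exact hww ((hY₁ hLt).trans (hY₂ (by omega)).symm)
    · have hjj' : (j₁ : ℕ) ≠ (j₂ : ℕ) := fun h => hjj (Fin.ext h)
      have hDA : ∀ ja jb : Fin k, (ja : ℕ) < (jb : ℕ) →
          (c ja.succ : ℕ) ≤ (c jb.castSucc : ℕ) := by
        intro ja jb h
        rcases eq_or_lt_of_le (show ((ja.succ : Fin (k+1)) : ℕ) ≤ ((jb.castSucc : Fin (k+1)) : ℕ) by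
          simp only [Fin.val_succ, Fin.coe_castSucc]; omega) with h' | h'
        · rw [Fin.ext h']
        · exact le_of_lt (hmono _ _ (Fin.lt_def.mpr h'))
      rcases lt_or_gt_of_ne hjj' with h | h
      · have := hDA j₁ j₂ h; omega
      · have := hDA j₂ j₁ h; omega
  · -- edges
    have hkey : ∀ j₁ j₂ : Fin k, (j₂ : ℕ) = (j₁ : ℕ) + 1 → qv j₁.succ ∈ φ (j₂, y) := by
      intro j₁ j₂ hj
      have hcs : j₂.castSucc = j₁.succ := Fin.ext (by simp [Fin.val_succ, hj])
      have hjR1 := hjR j₁.succ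
      have hADj₂ := hAD j₂
      rw [hcs] at hADj₂
      by_cases hq2 : (jR j₁.succ : ℕ) < (c j₂.succ : ℕ)
      · refine hsegmem j₂ y rfl (jR j₁.succ) ?_ hq2 (qv j₁.succ) (hqv j₁.succ)
        rw [hcs]; omega
      · have hEq : jR j₁.succ = c j₂.succ := Fin.ext (by omega)
        have hjl : jL j₂.succ = c j₁.succ := by
          have := hjL j₂.succ
          exact Fin.ext (by omega)
        obtain ⟨pr, -, hu⟩ := huniq (c j₁.succ) (c j₂.succ) (by omega)
        have e₁ := hu (((g j₁.succ).symm x).val, qv j₁.succ)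
          ⟨((g j₁.succ).symm x).2, hEq ▸ hqv j₁.succ, hadjR j₁.succ⟩
        have e₂ := hu (pv j₂.succ, ((g j₂.succ).symm y).val)
          ⟨hjl ▸ hpv j₂.succ, ((g j₂.succ).symm y).2, hadjL j₂.succ⟩
        have heq : qv j₁.succ = ((g j₂.succ).symm y).val :=
          congrArg Prod.snd (e₁.trans e₂.symm)
        exact heq ▸ hselfmem j₂ y
    rintro ⟨j₁, w₁⟩ ⟨j₂, w₂⟩ hadj
    rcases hadj with ⟨h1, h2⟩ | ⟨h1, h2, h3⟩ | ⟨h1, h2, h3⟩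
    · obtain rfl : j₁ = j₂ := h1
      exact ⟨_, hselfmem j₁ w₁, _, hselfmem j₁ w₂, ((g j₁.succ).symm.map_adj_iff).mpr h2⟩
    · refine ⟨((g j₁.succ).symm w₁).val, hselfmem j₁ w₁, qv j₁.succ,
        ?_, ?_⟩
      · have h3' : w₂ = y := h3
        rw [h3']; exact hkey j₁ j₂ h1
      · have h2' : w₁ = x := h2
        rw [h2']; exact hadjR j₁.succ
    · refine ⟨qv j₂.succ, ?_, ((g j₂.succ).symm w₂).val, hselfmem j₂ w₂, ?_⟩
      · have h2' : w₁ = y := h2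
        rw [h2']; exact hkey j₂ j₁ h1
      · have h3' : w₂ = x := h3
        rw [h3']; exact (hadjR j₂.succ).symm


def NeckP {κ : Type} {β : κ → Type} (F : ∀ i : κ, SimpleGraph (β i))
    (𝒢 : ∀ V : Type, SimpleGraph V → Prop) (k : ℕ) (τ : Σ b : κ, β b × β b) : Prop :=
  ∃ (V : Type) (G : SimpleGraph V) (n : ℕ) (S : Fin n → Set V),
    𝒢 V G ∧ IsNecklaceWith F G n S ∧ ∃ c : Fin (k + 1) → Fin n,
      (∀ m₁ m₂ : Fin (k + 1), m₁ < m₂ → (c m₁ : ℕ) < (c m₂ : ℕ)) ∧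
      ∀ m, OccursAt F G S τ.1 τ.2.1 τ.2.2 (c m)

lemma NeckP_mono {κ : Type} {β : κ → Type} {F : ∀ i : κ, SimpleGraph (β i)}
    {𝒢 : ∀ V : Type, SimpleGraph V → Prop} {k k' : ℕ} {τ : Σ b : κ, β b × β b}
    (hkk : k ≤ k') (h : NeckP F 𝒢 k' τ) : NeckP F 𝒢 k τ := by
  obtain ⟨V, G, n, S, hG, hN, c, hmono, hocc⟩ := h
  refine ⟨V, G, n, S, hG, hN, fun m => c (Fin.castLE (by omega) m), ?_, fun m => hocc _⟩
  intro m₁ m₂ hm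
  exact hmono _ _ (Fin.lt_def.mpr (show ((Fin.castLE (by omega) m₁ : Fin (k'+1)) : ℕ) < ((Fin.castLE (by omega) m₂ : Fin (k'+1)) : ℕ) from Fin.lt_def.mp hm))

theorem stmt10 (κ : Type) [Fintype κ] (β : κ → Type) (instβ : ∀ i, Fintype (β i))
    (F : ∀ i : κ, SimpleGraph (β i)) (hFconn : ∀ i, (F i).Connected)
    (𝒢 : ∀ V : Type, SimpleGraph V → Prop)
    (hminor : ∀ (V W : Type) (G : SimpleGraph V) (H : SimpleGraph W),
      𝒢 V G → IsMinorOf H G → 𝒢 W H)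
    (hlong : ∀ t : ℕ, ∃ (V : Type) (_ : Fintype V) (G : SimpleGraph V) (t' : ℕ),
      t ≤ t' ∧ 𝒢 V G ∧ IsNecklace F G t') :
    (∀ t : ℕ, ∃ (V : Type) (_ : Fintype V) (G : SimpleGraph V) (t' : ℕ),
      t ≤ t' ∧ 𝒢 V G ∧ ∃ (b : κ) (x y : β b) (S : Fin t' → Set V),
        IsUniformNecklaceWith (F b) x y G t' S) ∧
    ∃ (b : κ) (x y : β b),
      ∀ (V : Type) (G : SimpleGraph V) (t : ℕ) (S : Fin t → Set V),
        IsUniformNecklaceWith (F b) x y G t S → 𝒢 V G := by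
  classical
  haveI : ∀ i, Fintype (β i) := instβ
  haveI : Fintype (Σ b : κ, β b × β b) := inferInstance
  have hP : ∀ k : ℕ, ∃ τ : Σ b : κ, β b × β b, NeckP F 𝒢 k τ := by
    intro k
    set N := Fintype.card (Σ b : κ, β b × β b) with hN
    obtain ⟨V, fV, G, t', ht, hG, S, hNeck⟩ := hlong (N * (k + 1) + 3)
    have hocc_all : ∀ m : Fin (t' - 2), ∃ τ : Σ b : κ, β b × β b,
        OccursAt F G S τ.1 τ.2.1 τ.2.2 ⟨(m : ℕ) + 1, by have := m.isLt; omega⟩ := by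
      intro m
      obtain ⟨b, x, y, h⟩ := occurs_exists hNeck ⟨(m : ℕ) + 1, by have := m.isLt; omega⟩
        (by simp) (by have := m.isLt; simp only [Fin.val_mk]; omega)
      exact ⟨⟨b, x, y⟩, h⟩
    choose f hf using hocc_all
    obtain ⟨τ, hτ⟩ := Fintype.exists_lt_card_fiber_of_mul_lt_card f
      (n := k + 1) (by rw [Fintype.card_fin, ← hN]; omega)
    set s := Finset.univ.filter (fun a => f a = τ) with hs
    have hcard : k + 1 ≤ s.card := le_of_lt hτ
    set e := s.orderIsoOfFin rfl with he
    have hfib : ∀ a : Fin (t' - 2), a ∈ s → f a = τ := by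
      intro a ha
      exact (Finset.mem_filter.mp ha).2
    refine ⟨τ, V, G, t', S, hG, hNeck,
      fun m => ⟨((e (Fin.castLE hcard m)) : Fin (t' - 2)) + 1,
        by have := ((e (Fin.castLE hcard m)) : Fin (t' - 2)).isLt; omega⟩, ?_, ?_⟩
    · intro m₁ m₂ hm
      have h1 : Fin.castLE hcard m₁ < Fin.castLE hcard m₂ :=
        Fin.lt_def.mpr (Fin.lt_def.mp hm)
      have h2 := e.strictMono h1
      have h3 : ((e (Fin.castLE hcard m₁)) : Fin (t' - 2)) <
          ((e (Fin.castLE hcard m₂)) : Fin (t' - 2)) := h2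
      simp only [Fin.val_mk]
      omega
    · intro m
      have hmem := (e (Fin.castLE hcard m)).2
      have := hf ((e (Fin.castLE hcard m)) : Fin (t' - 2))
      rw [hfib _ hmem] at this
      exact this
  have hfix : ∃ τ : Σ b : κ, β b × β b, ∀ k, NeckP F 𝒢 k τ := by
    by_contra hcon
    push_neg at hcon
    choose kf hkf using hcon
    obtain ⟨τ, hτ⟩ := hP (Finset.univ.sup kf)
    exact hkf τ (NeckP_mono (Finset.le_sup (Finset.mem_univ τ)) hτ)
  obtain ⟨⟨b, x, y⟩, hτ⟩ := hfix
  have hNk : ∀ k : ℕ, 𝒢 (Fin k × β b) (Nk (F b) x y k) := by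
    intro k
    obtain ⟨V, G, n, S, hG, hNeck, c, hmono', hocc⟩ := hτ k
    exact hminor V (Fin k × β b) G (Nk (F b) x y k) hG
      (lemD hFconn hNeck b x y k c hmono' hocc)
  constructor
  · intro t
    exact ⟨Fin t × β b, inferInstance, Nk (F b) x y t, t, le_refl t, hNk t,
      b, x, y, fun i => {p | p.1 = i}, nk_isUniform (F b) x y t⟩
  · exact ⟨b, x, y, fun V G t S hU => hminor _ _ _ _ (hNk t) (uniform_minor hU)⟩
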